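/- Surjectivity of the CTC reduction onto bounded-length blank-free texts: for any blank-free text y of length t and any S ≥ 2t - 1 (S ≥ t if y has no consecutive equal tokens), there exists a token sequence w of length exactly S with Γ(w) = y. -/

import Mathlib

/-- The CTC reduction Γ: merge consecutive equal tokens, then remove blanks. -/
def gammaCTC {σ : Type*} [DecidableEq σ] (ε : σ) (w : List σ) : List σ :=
  (w.destutter (· ≠ ·)).filter (· ≠ ε)

/-- Insert a blank between consecutive equal tokens. -/
def padCTC {σ : Type*} [DecidableEq σ] (ε : σ) : List σ → List σ
  | [] => []
  | [a] => [a]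
  | a :: b :: t => if a = b then a :: ε :: padCTC ε (b :: t) else a :: padCTC ε (b :: t)

lemma gammaCTC_blank_cons {σ : Type*} [DecidableEq σ] (ε : σ) (w : List σ) :
    gammaCTC ε (ε :: w) = gammaCTC ε w := by
  cases w with
  | nil => simp [gammaCTC]
  | cons b t =>
    by_cases hb : b = ε
    · subst hb
      simp [gammaCTC, List.destutter_cons_cons, List.destutter_cons']
    · simp [gammaCTC, List.destutter_cons_cons, List.destutter_cons', Ne.symm hb, hb]

lemma gammaCTC_replicate_append {σ : Type*} [DecidableEq σ] (ε : σ) (k : ℕ) (w : List σ) :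
    gammaCTC ε (List.replicate k ε ++ w) = gammaCTC ε w := by
  induction k with
  | zero => simp
  | succ n ih => simpa [List.replicate_succ, gammaCTC_blank_cons] using ih

lemma padCTC_cons {σ : Type*} [DecidableEq σ] (ε b : σ) (s : List σ) :
    ∃ r, padCTC ε (b :: s) = b :: r := by
  cases s with
  | nil => exact ⟨[], rfl⟩
  | cons c u =>
    rw [padCTC]
    split
    · exact ⟨_, rfl⟩
    · exact ⟨_, rfl⟩

lemma padCTC_chain' {σ : Type*} [DecidableEq σ] (ε : σ) (y : List σ) (hy : ε ∉ y) :
    (padCTC ε y).Chain' (· ≠ ·) := by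
  induction y with
  | nil => exact List.isChain_nil
  | cons a t ih =>
    cases t with
    | nil => exact List.isChain_singleton _
    | cons b s =>
      have hb : b ≠ ε := fun h => hy (by simp [h])
      have hrest := ih (fun h => hy (List.mem_cons_of_mem _ h))
      obtain ⟨r, hr⟩ := padCTC_cons ε b s
      by_cases hab : a = b
      · rw [padCTC, if_pos hab, hr]
        exact List.isChain_cons_cons.2 ⟨by simpa [hab] using hb,
          List.isChain_cons_cons.2 ⟨Ne.symm hb, hr ▸ hrest⟩⟩
      · rw [padCTC, if_neg hab, hr]
        exact List.isChain_cons_cons.2 ⟨hab, hr ▸ hrest⟩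

lemma padCTC_filter {σ : Type*} [DecidableEq σ] (ε : σ) (y : List σ) (hy : ε ∉ y) :
    (padCTC ε y).filter (· ≠ ε) = y := by
  induction y with
  | nil => simp [padCTC]
  | cons a t ih =>
    have ha : a ≠ ε := fun h => hy (by simp [h])
    have hrest := ih (fun h => hy (List.mem_cons_of_mem _ h))
    cases t with
    | nil => simp [padCTC, ha]
    | cons b s =>
      by_cases hab : a = b
      · rw [padCTC, if_pos hab]
        simpa [ha] using hrest
      · rw [padCTC, if_neg hab]
        simpa [ha] using hrest

lemma padCTC_length {σ : Type*} [DecidableEq σ] (ε : σ) (y : List σ) :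
    (padCTC ε y).length ≤ 2 * y.length - 1 := by
  induction y with
  | nil => simp [padCTC]
  | cons a t ih =>
    cases t with
    | nil => simp [padCTC]
    | cons b s =>
      simp only [List.length_cons] at ih ⊢
      by_cases hab : a = b
      · rw [padCTC, if_pos hab]
        simp only [List.length_cons]
        omega
      · rw [padCTC, if_neg hab]
        simp only [List.length_cons]
        omega

lemma gammaCTC_padCTC {σ : Type*} [DecidableEq σ] (ε : σ) (y : List σ) (hy : ε ∉ y) :
    gammaCTC ε (padCTC ε y) = y := by
  rw [gammaCTC, List.destutter_of_isChain _ _ (padCTC_chain' ε y hy), padCTC_filter ε y hy]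

lemma padCTC_eq_self {σ : Type*} [DecidableEq σ] (ε : σ) (y : List σ)
    (hc : y.Chain' (· ≠ ·)) : padCTC ε y = y := by
  induction y with
  | nil => rfl
  | cons a t ih =>
    cases t with
    | nil => rfl
    | cons b s =>
      have hab : a ≠ b := (List.isChain_cons_cons.1 hc).1
      rw [padCTC, if_neg hab, ih (List.isChain_cons_cons.1 hc).2]

/-- Surjectivity of the CTC reduction onto bounded-length blank-free texts:
for any blank-free text `y` of length `t` and any `S` with `S ≥ 2t - 1` (or merely `S ≥ t`
if `y` has no two consecutive equal tokens), there exists a token sequence `w` of length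
exactly `S` with `Γ(w) = y`. -/
theorem gammaCTC_surjective_on_blank_free
    {σ : Type*} [Fintype σ] [DecidableEq σ] (ε : σ)
    (y : List σ) (hy : ε ∉ y) (S : ℕ)
    (hS : 2 * y.length - 1 ≤ S ∨ (y.Chain' (· ≠ ·) ∧ y.length ≤ S)) :
    ∃ w : List σ, w.length = S ∧ gammaCTC ε w = y := by
  have hlen : (padCTC ε y).length ≤ S := by
    rcases hS with h | ⟨hc, h⟩
    · exact le_trans (padCTC_length ε y) h
    · rw [padCTC_eq_self ε y hc]; exact h
  refine ⟨List.replicate (S - (padCTC ε y).length) ε ++ padCTC ε y, ?_, ?_⟩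
  · simp [List.length_replicate]; omega
  · rw [gammaCTC_replicate_append, gammaCTC_padCTC ε y hy]
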